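/- (Theorem 1, optimal coordinate increment.) Let α > 0, κ > 0, β, η ∈ ℝ, and a ∈ [0,1] with αa < 1, and define g(d) = log(1 + αd) + (καd² − (β+η)d)/(1 + αd) on {d : 1+αd > 0} ⊇ [−a, 1−a]. Define d* as follows: if 4κ(κ+β+η) + α² > 0, set d* = min{max{d̂, −a}, 1−a} with d̂ = (−α − 2κ + √(4κ(κ+β+η) + α²))/(2κα); if 4κ(κ+β+η) + α² ≤ 0, set d* = −a. Then d* is an optimal solution of min_{d ∈ [−a, 1−a]} g(d), i.e., g(d*) ≤ g(d) for all d ∈ [−a, 1−a]. -/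

import Mathlib

noncomputable def gfun (α κ β η : ℝ) : ℝ → ℝ :=
  fun d => Real.log (1 + α * d) + (κ * α * d ^ 2 - (β + η) * d) / (1 + α * d)

def Nfun (α κ β η : ℝ) (d : ℝ) : ℝ :=
  κ * α ^ 2 * d ^ 2 + α * (α + 2 * κ) * d + (α - β - η)

lemma gfun_hasDerivAt (α κ β η : ℝ) (d : ℝ) (hd : 0 < 1 + α * d) :
    HasDerivAt (gfun α κ β η) (Nfun α κ β η d / (1 + α * d) ^ 2) d := by
  have h1 : HasDerivAt (fun x : ℝ => 1 + α * x) α d := by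
    simpa using ((hasDerivAt_id d).const_mul α).const_add 1
  have hlog : HasDerivAt (fun x : ℝ => Real.log (1 + α * x)) (α / (1 + α * d)) d :=
    h1.log hd.ne'
  have hu : HasDerivAt (fun x : ℝ => κ * α * x ^ 2 - (β + η) * x)
      (κ * α * (2 * d) - (β + η)) d := by
    have := ((hasDerivAt_pow 2 d).const_mul (κ * α)).sub ((hasDerivAt_id d).const_mul (β + η))
    exact this.congr_deriv (by norm_num)
  have hdiv := hu.div h1 hd.ne'
  have htot := hlog.add hdiv
  refine htot.congr_deriv ?_
  have hne : (1 + α * d) ≠ 0 := hd.ne'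
  simp only [Nfun]
  field_simp
  ring

lemma gfun_monotoneOn (α κ β η x y : ℝ) (hpos : ∀ d ∈ Set.Icc x y, 0 < 1 + α * d)
    (hN : ∀ d ∈ Set.Icc x y, 0 ≤ Nfun α κ β η d) :
    MonotoneOn (gfun α κ β η) (Set.Icc x y) := by
  apply monotoneOn_of_deriv_nonneg (convex_Icc x y)
  · exact fun d hd => ((gfun_hasDerivAt α κ β η d (hpos d hd)).continuousAt).continuousWithinAt
  · intro d hd
    rw [interior_Icc] at hd
    exact ((gfun_hasDerivAt α κ β η d
      (hpos d (Set.Ioo_subset_Icc_self hd))).differentiableAt).differentiableWithinAt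
  · intro d hd
    rw [interior_Icc] at hd
    have hmem := Set.Ioo_subset_Icc_self hd
    rw [(gfun_hasDerivAt α κ β η d (hpos d hmem)).deriv]
    exact div_nonneg (hN d hmem) (by positivity)

lemma gfun_antitoneOn (α κ β η x y : ℝ) (hpos : ∀ d ∈ Set.Icc x y, 0 < 1 + α * d)
    (hN : ∀ d ∈ Set.Icc x y, Nfun α κ β η d ≤ 0) :
    AntitoneOn (gfun α κ β η) (Set.Icc x y) := by
  apply antitoneOn_of_deriv_nonpos (convex_Icc x y)
  · exact fun d hd => ((gfun_hasDerivAt α κ β η d (hpos d hd)).continuousAt).continuousWithinAt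
  · intro d hd
    rw [interior_Icc] at hd
    exact ((gfun_hasDerivAt α κ β η d
      (hpos d (Set.Ioo_subset_Icc_self hd))).differentiableAt).differentiableWithinAt
  · intro d hd
    rw [interior_Icc] at hd
    have hmem := Set.Ioo_subset_Icc_self hd
    rw [(gfun_hasDerivAt α κ β η d (hpos d hmem)).deriv]
    exact div_nonpos_of_nonpos_of_nonneg (hN d hmem) (by positivity)

theorem stmt_4 (α κ β η a : ℝ) (hα : 0 < α) (hκ : 0 < κ)
    (ha : a ∈ Set.Icc (0 : ℝ) 1) (haa : α * a < 1) :
    let g : ℝ → ℝ := fun d => Real.log (1 + α * d) + (κ * α * d ^ 2 - (β + η) * d) / (1 + α * d)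
    let dstar : ℝ :=
      if 0 < 4 * κ * (κ + β + η) + α ^ 2 then
        min (max ((-α - 2 * κ + Real.sqrt (4 * κ * (κ + β + η) + α ^ 2)) / (2 * κ * α)) (-a))
          (1 - a)
      else -a
    ∀ d ∈ Set.Icc (-a) (1 - a), g dstar ≤ g d := by
  intro g dstar
  obtain ⟨ha0, ha1⟩ := ha
  have hgg : g = gfun α κ β η := rfl
  have hkey : ∀ d : ℝ, 4 * κ * Nfun α κ β η d
      = (2 * κ * α * d + α + 2 * κ) ^ 2 - (4 * κ * (κ + β + η) + α ^ 2) := by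
    intro d; unfold Nfun; ring
  have hposleft : ∀ d : ℝ, -a ≤ d → 0 < 1 + α * d := by
    intro d hd
    nlinarith [mul_le_mul_of_nonneg_left hd hα.le]
  have haineq : -a ≤ 1 - a := by linarith
  by_cases hΔ : 0 < 4 * κ * (κ + β + η) + α ^ 2
  · -- quadratic has two roots
    have hdstar : dstar = min (max ((-α - 2 * κ +
        Real.sqrt (4 * κ * (κ + β + η) + α ^ 2)) / (2 * κ * α)) (-a)) (1 - a) := if_pos hΔ
    set s := Real.sqrt (4 * κ * (κ + β + η) + α ^ 2) with hs_def
    set dh : ℝ := (-α - 2 * κ + s) / (2 * κ * α) with hdh_def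
    have hs_nonneg : 0 ≤ s := Real.sqrt_nonneg _
    have hs_sq : s ^ 2 = 4 * κ * (κ + β + η) + α ^ 2 := Real.sq_sqrt hΔ.le
    have h2κα : 0 < 2 * κ * α := by positivity
    have hL : 2 * κ * α * dh + α + 2 * κ = s := by
      rw [hdh_def]
      field_simp
      ring
    -- N nonneg to the right of dh
    have hNge : ∀ d : ℝ, dh ≤ d → 0 ≤ Nfun α κ β η d := by
      intro d hd
      have h1 : 2 * κ * α * dh ≤ 2 * κ * α * d := mul_le_mul_of_nonneg_left hd h2κα.le
      have h2 : s ≤ 2 * κ * α * d + α + 2 * κ := by linarith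
      nlinarith [hkey d, hs_sq, hs_nonneg]
    -- N nonpos on [-a, dh]
    have hNle : ∀ d : ℝ, -a ≤ d → d ≤ dh → Nfun α κ β η d ≤ 0 := by
      intro d hd1 hd2
      have h1 : 2 * κ * α * d ≤ 2 * κ * α * dh := mul_le_mul_of_nonneg_left hd2 h2κα.le
      have h2 : 2 * κ * α * d + α + 2 * κ ≤ s := by linarith
      have h3 : 2 * κ * α * (-a) ≤ 2 * κ * α * d := mul_le_mul_of_nonneg_left hd1 h2κα.le
      have h4 : 0 < 2 * κ * α * d + α + 2 * κ := by nlinarith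
      nlinarith [hkey d, hs_sq]
    have hdstar_mem : dstar ∈ Set.Icc (-a) (1 - a) := by
      rw [hdstar]
      constructor
      · exact le_min (le_max_right _ _) haineq
      · exact min_le_right _ _
    intro d hd
    rcases le_total d dstar with hcase | hcase
    · -- use antitonicity on [-a, dstar]
      rcases le_or_gt (-a) dh with h1 | h1
      · have hstar_le : dstar ≤ dh := by
          rw [hdstar]
          exact (min_le_left _ _).trans (le_of_eq (max_eq_left h1))
        have hanti : AntitoneOn (gfun α κ β η) (Set.Icc (-a) dstar) :=
          gfun_antitoneOn α κ β η (-a) dstar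
            (fun e he => hposleft e he.1)
            (fun e he => hNle e he.1 (he.2.trans hstar_le))
        rw [hgg]
        exact hanti ⟨hd.1, hcase⟩ ⟨hdstar_mem.1, le_rfl⟩ hcase
      · have hds : dstar = -a := by
          rw [hdstar, max_eq_right h1.le, min_eq_left haineq]
        have hda : d = -a := le_antisymm (hds ▸ hcase) hd.1
        rw [hda, hds]
    · -- use monotonicity on [dstar, 1-a]
      rcases le_or_gt dh (1 - a) with h1 | h1
      · have hle_star : dh ≤ dstar := by
          rw [hdstar]
          exact le_min (le_max_left _ _) h1
        have hmono : MonotoneOn (gfun α κ β η) (Set.Icc dstar (1 - a)) :=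
          gfun_monotoneOn α κ β η dstar (1 - a)
            (fun e he => hposleft e (hdstar_mem.1.trans he.1))
            (fun e he => hNge e (hle_star.trans he.1))
        rw [hgg]
        exact hmono ⟨le_rfl, hdstar_mem.2⟩ ⟨hcase, hd.2⟩ hcase
      · have hds : dstar = 1 - a := by
          rw [hdstar]
          refine min_eq_right ?_
          exact le_max_of_le_left h1.le
        have hda : d = 1 - a := le_antisymm hd.2 (hds ▸ hcase)
        rw [hda, hds]
  · -- N nonneg everywhere, g monotone, optimum at -a
    push_neg at hΔ
    have hdstar : dstar = -a := if_neg (not_lt.mpr hΔ)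
    have hN : ∀ d : ℝ, 0 ≤ Nfun α κ β η d := by
      intro d
      nlinarith [hkey d, sq_nonneg (2 * κ * α * d + α + 2 * κ)]
    have hmono : MonotoneOn (gfun α κ β η) (Set.Icc (-a) (1 - a)) :=
      gfun_monotoneOn α κ β η (-a) (1 - a)
        (fun e he => hposleft e he.1)
        (fun e he => hN e)
    intro d hd
    rw [hgg, hdstar]
    exact hmono ⟨le_rfl, haineq⟩ hd hd.1
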